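/- arXiv:0809.1261 — 4 statements merged into one kernel-verified Lean document; each statement's English description precedes it below -/
import Mathlib

section
/- Let (A_i), (B_i), (t_i) be sequences in SL(2,ℂ). Suppose A_i → A and B_i → B in SL(2,ℂ), where A and B are loxodromic and have no common eigenvector in ℂ², and suppose that both sequences (t_i A_i t_i⁻¹) and (t_i B_i t_i⁻¹) converge in SL(2,ℂ). Then the sequence (t_i) has a convergent subsequence in SL(2,ℂ). -/
open Matrix Filter Topology

abbrev SL2C := Matrix.SpecialLinearGroup (Fin 2) ℂ

/-- An element of SL(2,ℂ) is loxodromic if there is no real `r` with `0 ≤ r ≤ 4`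
such that `(tr A)² = r`. -/
def Loxodromic (A : SL2C) : Prop :=
  ¬ ∃ r : ℝ, 0 ≤ r ∧ r ≤ 4 ∧
    (Matrix.trace (A : Matrix (Fin 2) (Fin 2) ℂ)) ^ 2 = (r : ℂ)

/-- Convergence in SL(2,ℂ), in the topology induced from the 2×2 complex matrices. -/
def SLTendsto (A : ℕ → SL2C) (L : SL2C) : Prop :=
  Filter.Tendsto (fun i => (A i : Matrix (Fin 2) (Fin 2) ℂ)) Filter.atTop
    (nhds (L : Matrix (Fin 2) (Fin 2) ℂ))

/-- `A` and `B` have no common eigenvector in ℂ². -/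
def NoCommonEigenvector (A B : SL2C) : Prop :=
  ¬ ∃ v : Fin 2 → ℂ, v ≠ 0 ∧
    (∃ μ : ℂ, (A : Matrix (Fin 2) (Fin 2) ℂ).mulVec v = μ • v) ∧
    (∃ ν : ℂ, (B : Matrix (Fin 2) (Fin 2) ℂ).mulVec v = ν • v)

attribute [local instance] Matrix.normedAddCommGroup Matrix.normedSpace

private lemma twodim_ker (p q : ℂ) (hpq : ¬(p = 0 ∧ q = 0)) (v w : Fin 2 → ℂ)
    (hv : p * v 0 + q * v 1 = 0) (hw : p * w 0 + q * w 1 = 0) (hv0 : v ≠ 0) :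
    ∃ μ : ℂ, w = μ • v := by
  have hD : v 0 * w 1 - v 1 * w 0 = 0 := by
    rcases eq_or_ne p 0 with hp | hp
    · have hq : q ≠ 0 := fun h => hpq ⟨hp, h⟩
      subst hp
      have h1 : v 1 = 0 := by
        have := hv
        simp only [zero_mul, zero_add, mul_eq_zero] at this
        tauto
      have h2 : w 1 = 0 := by
        have := hw
        simp only [zero_mul, zero_add, mul_eq_zero] at this
        tauto
      simp [h1, h2]
    · have : p * (v 0 * w 1 - v 1 * w 0) = 0 := by linear_combination w 1 * hv - v 1 * hw
      exact (mul_eq_zero.mp this).resolve_left hp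
  have hvi : v 0 ≠ 0 ∨ v 1 ≠ 0 := by
    by_contra h
    push_neg at h
    exact hv0 (funext fun i => by fin_cases i <;> simp [h.1, h.2])
  rcases hvi with h0 | h1
  · refine ⟨w 0 / v 0, funext fun i => ?_⟩
    fin_cases i
    · simp; field_simp
    · simp; field_simp; linear_combination hD
  · by_cases h0 : v 0 = 0
    · have hw0 : w 0 = 0 := by
        have : v 1 * w 0 = 0 := by linear_combination -hD + w 1 * h0
        exact (mul_eq_zero.mp this).resolve_left h1
      refine ⟨w 1 / v 1, funext fun i => ?_⟩
      fin_cases i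
      · simp [h0, hw0]
      · simp; field_simp
    · refine ⟨w 0 / v 0, funext fun i => ?_⟩
      fin_cases i
      · simp; field_simp
      · simp; field_simp; linear_combination hD

private lemma exists_common_ker (s : Matrix (Fin 2) (Fin 2) ℂ) (hs : s ≠ 0)
    (hdet : s.det = 0) :
    ∃ v : Fin 2 → ℂ, v ≠ 0 ∧ ∀ M : Matrix (Fin 2) (Fin 2) ℂ,
      s * M * s.adjugate = 0 → ∃ μ : ℂ, M.mulVec v = μ • v := by
  have hadj : s.adjugate ≠ 0 := by
    intro h
    have h2 := Matrix.adjugate_adjugate s (by simp)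
    rw [h, Matrix.adjugate_zero] at h2
    exact hs (by simpa using h2.symm)
  have hentry : ∃ r c, s.adjugate r c ≠ 0 := by
    by_contra h
    push_neg at h
    exact hadj (by ext r c; simpa using h r c)
  obtain ⟨r, c, hrc⟩ := hentry
  set v : Fin 2 → ℂ := s.adjugate.mulVec (Pi.single c 1) with hv_def
  have hvne : v ≠ 0 := by
    intro h
    have : v r = 0 := by rw [h]; rfl
    rw [hv_def, Matrix.mulVec_single] at this
    simp at this
    exact hrc this
  have hkerv : s.mulVec v = 0 := by
    rw [hv_def, Matrix.mulVec_mulVec, Matrix.mul_adjugate, hdet, zero_smul,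
      Matrix.zero_mulVec]
  -- choose a nonzero row of s
  have hrow : ∃ r0, ¬(s r0 0 = 0 ∧ s r0 1 = 0) := by
    by_contra h
    push_neg at h
    refine hs ?_
    ext i j
    fin_cases j
    · simpa using (h i).1
    · simpa using (h i).2
  obtain ⟨r0, hr0⟩ := hrow
  have hkermem : ∀ w : Fin 2 → ℂ, s.mulVec w = 0 → s r0 0 * w 0 + s r0 1 * w 1 = 0 := by
    intro w hw
    have := congrFun hw r0
    simpa [Matrix.mulVec, dotProduct, Fin.sum_univ_two] using this
  refine ⟨v, hvne, fun M hM => ?_⟩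
  have hkerw : s.mulVec (M.mulVec v) = 0 := by
    rw [hv_def, Matrix.mulVec_mulVec, Matrix.mulVec_mulVec, hM, Matrix.zero_mulVec]
  exact twodim_ker _ _ hr0 v (M.mulVec v) (hkermem v hkerv) (hkermem _ hkerw) hvne

/-- If `A_i → A` and `B_i → B` with `A`, `B` loxodromic and without a common
eigenvector, and both sequences of conjugates `t_i A_i t_i⁻¹` and `t_i B_i t_i⁻¹`
converge, then `(t_i)` has a convergent subsequence. -/
theorem conjugating_sequence_has_convergent_subsequence
    (A B t : ℕ → SL2C) (A' B' : SL2C)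
    (hA : SLTendsto A A') (hB : SLTendsto B B')
    (hAlox : Loxodromic A') (hBlox : Loxodromic B')
    (hnc : NoCommonEigenvector A' B')
    (hconvA : ∃ LA : SL2C, SLTendsto (fun i => t i * A i * (t i)⁻¹) LA)
    (hconvB : ∃ LB : SL2C, SLTendsto (fun i => t i * B i * (t i)⁻¹) LB) :
    ∃ φ : ℕ → ℕ, StrictMono φ ∧ ∃ L : SL2C, SLTendsto (fun k => t (φ k)) L := by
  classical
  set Mat := Matrix (Fin 2) (Fin 2) ℂ
  have hdet1 : ∀ i, ((t i : Mat)).det = 1 := fun i => (t i).prop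
  have htne : ∀ i, (t i : Mat) ≠ 0 := by
    intro i h
    have := hdet1 i
    rw [h] at this
    simp at this
  have htpos : ∀ i, 0 < ‖(t i : Mat)‖ := fun i => norm_pos_iff.mpr (htne i)
  by_cases htend : Tendsto (fun i => ‖(t i : Mat)‖) atTop atTop
  · -- unbounded case: derive a contradiction
    exfalso
    obtain ⟨LA, hLA⟩ := hconvA
    obtain ⟨LB, hLB⟩ := hconvB
    set c : ℕ → ℂ := fun i => ((‖(t i : Mat)‖ : ℂ))⁻¹ with hc_def
    set s : ℕ → Mat := fun i => c i • (t i : Mat) with hs_def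
    have hnorm : ∀ i, ‖s i‖ = 1 := by
      intro i
      rw [hs_def]
      simp only [norm_smul, hc_def, norm_inv, Complex.norm_real]
      rw [Real.norm_of_nonneg (htpos i).le]
      exact inv_mul_cancel₀ (htpos i).ne'
    have hmem : ∀ i, s i ∈ Metric.sphere (0 : Mat) 1 := fun i => by
      simp [mem_sphere_zero_iff_norm, hnorm i]
    obtain ⟨sL, hsLmem, φ, hφ, hsconv⟩ :=
      (isCompact_sphere (0 : Mat) 1).tendsto_subseq hmem
    have hsLne : sL ≠ 0 := by
      rw [mem_sphere_zero_iff_norm] at hsLmem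
      intro h; rw [h] at hsLmem; simp at hsLmem
    -- c (φ k) → 0
    have hctend : Tendsto (fun k => c (φ k)) atTop (nhds 0) := by
      have h1 : Tendsto (fun k => ‖(t (φ k) : Mat)‖) atTop atTop :=
        htend.comp hφ.tendsto_atTop
      have h2 : Tendsto (fun k => (‖(t (φ k) : Mat)‖)⁻¹) atTop (nhds 0) :=
        tendsto_inv_atTop_zero.comp h1
      have h3 := (Complex.continuous_ofReal.tendsto 0).comp h2
      simp only [Function.comp_def, Complex.ofReal_inv, Complex.ofReal_zero] at h3
      exact h3
    -- det sL = 0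
    have hdetsk : ∀ k, (s (φ k)).det = (c (φ k)) ^ 2 := by
      intro k
      rw [hs_def]
      simp only
      rw [Matrix.det_smul, hdet1]
      norm_num
    have hdets : sL.det = 0 := by
      have h1 : Tendsto (fun k => (s (φ k)).det) atTop (nhds sL.det) :=
        (continuous_id.matrix_det.tendsto sL).comp hsconv
      have h2 : Tendsto (fun k => (s (φ k)).det) atTop (nhds 0) := by
        simp only [hdetsk]
        have := (hctend.pow 2)
        simpa using this
      exact tendsto_nhds_unique h1 h2
    -- the key limit identity
    have key : ∀ (C : ℕ → SL2C) (C' : SL2C) (LC : SL2C),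
        SLTendsto C C' → SLTendsto (fun i => t i * C i * (t i)⁻¹) LC →
        sL * (C' : Mat) * sL.adjugate = 0 := by
      intro C C' LC hC hLC
      have heq : ∀ k, s (φ k) * (C (φ k) : Mat) * (s (φ k)).adjugate
          = (c (φ k))^2 • ((t (φ k) * C (φ k) * (t (φ k))⁻¹ : SL2C) : Mat) := by
        intro k
        have hadj : (s (φ k)).adjugate = c (φ k) • ((t (φ k) : Mat)).adjugate := by
          rw [hs_def]; simp only; rw [Matrix.adjugate_smul]; norm_num
        rw [hadj, hs_def]
        simp only [Matrix.SpecialLinearGroup.coe_mul,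
          Matrix.SpecialLinearGroup.coe_inv]
        rw [Matrix.smul_mul, Matrix.mul_smul, Matrix.smul_mul, smul_smul, sq]
      have h1 : Tendsto (fun k => s (φ k) * (C (φ k) : Mat) * (s (φ k)).adjugate)
          atTop (nhds (sL * (C' : Mat) * sL.adjugate)) := by
        have hCφ : Tendsto (fun k => (C (φ k) : Mat)) atTop (nhds (C' : Mat)) :=
          hC.comp hφ.tendsto_atTop
        have hadjt : Tendsto (fun k => (s (φ k)).adjugate) atTop (nhds sL.adjugate) :=
          (continuous_id.matrix_adjugate.tendsto sL).comp hsconv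
        exact Filter.Tendsto.mul (Filter.Tendsto.mul (M := Matrix (Fin 2) (Fin 2) ℂ) hsconv hCφ) hadjt
      have h2 : Tendsto (fun k => s (φ k) * (C (φ k) : Mat) * (s (φ k)).adjugate)
          atTop (nhds 0) := by
        have hconj : Tendsto (fun k => ((t (φ k) * C (φ k) * (t (φ k))⁻¹ : SL2C) : Mat))
            atTop (nhds (LC : Mat)) := hLC.comp hφ.tendsto_atTop
        have h := ((hctend.pow 2).smul hconj)
        have h0 : ((0:ℂ)^2) • (LC : Mat) = 0 := by norm_num
        rw [h0] at h
        simp only [heq]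
        exact h
      exact tendsto_nhds_unique h1 h2
    have hAker := key A A' LA hA hLA
    have hBker := key B B' LB hB hLB
    obtain ⟨v, hv0, hv⟩ := exists_common_ker sL hsLne hdets
    exact hnc ⟨v, hv0, hv _ hAker, hv _ hBker⟩
  · -- bounded case
    rw [tendsto_atTop] at htend
    push_neg at htend
    obtain ⟨b, hb⟩ := htend
    try rw [Filter.not_eventually] at hb
    obtain ⟨φ, hφ, hφb⟩ := Filter.extraction_of_frequently_atTop hb
    have hmem : ∀ k, (t (φ k) : Mat) ∈ Metric.closedBall (0 : Mat) b := by
      intro k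
      rw [Metric.mem_closedBall, dist_zero_right]
      exact (hφb k).le
    obtain ⟨L, _, ψ, hψ, hLconv⟩ :=
      (isCompact_closedBall (0 : Mat) b).tendsto_subseq hmem
    have hdetL : L.det = 1 := by
      have h1 : Tendsto (fun k => ((t (φ (ψ k)) : Mat)).det) atTop (nhds L.det) :=
        (continuous_id.matrix_det.tendsto L).comp hLconv
      have h2 : Tendsto (fun k => ((t (φ (ψ k)) : Mat)).det) atTop (nhds 1) := by
        simp only [hdet1]
        exact tendsto_const_nhds
      exact tendsto_nhds_unique h1 h2
    exact ⟨φ ∘ ψ, hφ.comp hψ, ⟨L, hdetL⟩, hLconv⟩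
end

section
/- Let Γ be a group generated by two subgroups Γ¹ and Γ², and let ρ_i : Γ → SL(2,ℂ) be a sequence of group homomorphisms. Assume: (i) for every g ∈ Γ¹ the sequence (ρ_i(g)) converges in SL(2,ℂ); (ii) there exist elements t_i ∈ SL(2,ℂ) such that for every g ∈ Γ² the sequence (t_i ρ_i(g) t_i⁻¹) converges in SL(2,ℂ); (iii) there exist γ, δ ∈ Γ¹ ∩ Γ² such that the limits of (ρ_i(γ)) and (ρ_i(δ)) are loxodromic elements with no common eigenvector in ℂ². Then there is a subsequence (ρ_{i_k}) such that (ρ_{i_k}(g)) converges in SL(2,ℂ) for every g ∈ Γ. -/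
open Matrix Filter Topology

attribute [local instance] Matrix.normedAddCommGroup Matrix.normedSpace

abbrev M2' := Matrix (Fin 2) (Fin 2) ℂ

lemma cross_eq_zero (s : M2') (v w : Fin 2 → ℂ) (hs : s ≠ 0)
    (hv : s.mulVec v = 0) (hw : s.mulVec w = 0) :
    v 0 * w 1 - v 1 * w 0 = 0 := by
  have hv0 : s 0 0 * v 0 + s 0 1 * v 1 = 0 := by
    simpa [Matrix.mulVec, dotProduct, Fin.sum_univ_two] using congrFun hv 0
  have hv1 : s 1 0 * v 0 + s 1 1 * v 1 = 0 := by
    simpa [Matrix.mulVec, dotProduct, Fin.sum_univ_two] using congrFun hv 1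
  have hw0 : s 0 0 * w 0 + s 0 1 * w 1 = 0 := by
    simpa [Matrix.mulVec, dotProduct, Fin.sum_univ_two] using congrFun hw 0
  have hw1 : s 1 0 * w 0 + s 1 1 * w 1 = 0 := by
    simpa [Matrix.mulVec, dotProduct, Fin.sum_univ_two] using congrFun hw 1
  by_contra hc
  apply hs
  ext i j
  have e00 : s 0 0 * (v 0 * w 1 - v 1 * w 0) = 0 := by linear_combination w 1 * hv0 - v 1 * hw0
  have e01 : s 0 1 * (v 0 * w 1 - v 1 * w 0) = 0 := by linear_combination v 0 * hw0 - w 0 * hv0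
  have e10 : s 1 0 * (v 0 * w 1 - v 1 * w 0) = 0 := by linear_combination w 1 * hv1 - v 1 * hw1
  have e11 : s 1 1 * (v 0 * w 1 - v 1 * w 0) = 0 := by linear_combination v 0 * hw1 - w 0 * hv1
  fin_cases i <;> fin_cases j <;>
    simpa [hc] using (mul_eq_zero.mp (by assumption) : _ ∨ _).resolve_right hc

lemma exists_smul_of_ker (s : M2') (v w : Fin 2 → ℂ) (hs : s ≠ 0) (hv0 : v ≠ 0)
    (hv : s.mulVec v = 0) (hw : s.mulVec w = 0) : ∃ μ : ℂ, w = μ • v := by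
  have hcross := cross_eq_zero s v w hs hv hw
  have hv' : v 0 ≠ 0 ∨ v 1 ≠ 0 := by
    by_contra h
    push_neg at h
    exact hv0 (funext fun i => by fin_cases i <;> simp [h.1, h.2])
  rcases hv' with h | h
  · refine ⟨w 0 / v 0, funext fun i => ?_⟩
    fin_cases i <;> simp only [Pi.smul_apply, smul_eq_mul, Fin.zero_eta, Fin.mk_one]
    · field_simp
    · field_simp
      linear_combination hcross
  · refine ⟨w 1 / v 1, funext fun i => ?_⟩
    fin_cases i <;> simp only [Pi.smul_apply, smul_eq_mul, Fin.zero_eta, Fin.mk_one]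
    · field_simp
      linear_combination -hcross
    · field_simp

lemma common_eigen (A B s : M2') (hs : s ≠ 0) (hdet : s.det = 0)
    (hA : s * A * s.adjugate = 0) (hB : s * B * s.adjugate = 0) :
    ∃ v : Fin 2 → ℂ, v ≠ 0 ∧ (∃ μ : ℂ, A.mulVec v = μ • v) ∧
      (∃ ν : ℂ, B.mulVec v = ν • v) := by
  have hadj : s.adjugate ≠ 0 := by
    intro h
    apply hs
    have := congrArg Matrix.adjugate h
    rw [Matrix.adjugate_adjugate s (by simp), hdet] at this
    simpa using this
  obtain ⟨i, j, hij⟩ : ∃ i j, s.adjugate i j ≠ 0 := by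
    by_contra h
    push_neg at h
    exact hadj (Matrix.ext fun i j => h i j)
  set v : Fin 2 → ℂ := s.adjugate.mulVec (Pi.single j 1) with hvdef
  have hvval : v = fun i => s.adjugate i j := by
    rw [hvdef, Matrix.mulVec_single]; simp; rfl
  have hv0 : v ≠ 0 := by
    intro h
    apply hij
    have := congrFun h i
    rw [hvval] at h
    exact congrFun h i
  have hsv : s.mulVec v = 0 := by
    rw [hvdef, Matrix.mulVec_mulVec, Matrix.mul_adjugate, hdet, zero_smul,
      Matrix.zero_mulVec]
  have key : ∀ M : M2', s * M * s.adjugate = 0 → ∃ μ : ℂ, M.mulVec v = μ • v := by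
    intro M hM
    have hw : s.mulVec (M.mulVec v) = 0 := by
      rw [hvdef, Matrix.mulVec_mulVec, Matrix.mulVec_mulVec, hM,
        Matrix.zero_mulVec]
    exact exists_smul_of_ker s v (M.mulVec v) hs hv0 hsv hw
  exact ⟨v, hv0, key A hA, key B hB⟩
/-- If `Γ` is generated by subgroups `Γ¹` and `Γ²`, the restrictions of `ρ_i` to `Γ¹`
converge, the restrictions to `Γ²` converge up to conjugation by elements `t_i`, and
there are `γ, δ ∈ Γ¹ ∩ Γ²` whose images converge to loxodromic elements with no
common eigenvector, then a subsequence of `ρ_i` converges on all of `Γ`. -/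
theorem amalgamated_convergence {Γ : Type*} [Group Γ] (Γ₁ Γ₂ : Subgroup Γ)
    (hgen : Subgroup.closure ((Γ₁ : Set Γ) ∪ (Γ₂ : Set Γ)) = ⊤)
    (ρ : ℕ → Γ →* SL2C)
    (h1 : ∀ g ∈ Γ₁, ∃ L : SL2C, SLTendsto (fun i => ρ i g) L)
    (h2 : ∃ t : ℕ → SL2C, ∀ g ∈ Γ₂,
      ∃ L : SL2C, SLTendsto (fun i => t i * ρ i g * (t i)⁻¹) L)
    (h3 : ∃ γ ∈ Γ₁ ⊓ Γ₂, ∃ δ ∈ Γ₁ ⊓ Γ₂, ∃ Lγ Lδ : SL2C,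
      SLTendsto (fun i => ρ i γ) Lγ ∧ SLTendsto (fun i => ρ i δ) Lδ ∧
      Loxodromic Lγ ∧ Loxodromic Lδ ∧ NoCommonEigenvector Lγ Lδ) :
    ∃ φ : ℕ → ℕ, StrictMono φ ∧
      ∀ g : Γ, ∃ L : SL2C, SLTendsto (fun k => ρ (φ k) g) L := by
  classical
  obtain ⟨t, ht⟩ := h2
  obtain ⟨γ, hγ, δ, hδ, Lγ, Lδ, hγconv, hδconv, -, -, hnce⟩ := h3
  set c : ℕ → ℝ := fun i => (1 + ‖(t i : M2')‖)⁻¹ with hcdef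
  set sM : ℕ → M2' := fun i => ((c i : ℝ) : ℂ) • (t i : M2') with hsMdef
  have hpos : ∀ i, 0 < 1 + ‖(t i : M2')‖ := fun i => by positivity
  have hcpos : ∀ i, 0 < c i := fun i => inv_pos.mpr (hpos i)
  have hcle : ∀ i, c i ≤ 1 := fun i => by
    rw [hcdef]
    rw [inv_le_one₀ (hpos i)]
    linarith [norm_nonneg (t i : M2')]
  have hnorm_s : ∀ i, ‖sM i‖ = 1 - c i := by
    intro i
    rw [hsMdef]
    simp only [norm_smul, Complex.norm_real, Real.norm_eq_abs,
      abs_of_pos (hcpos i)]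
    rw [hcdef]
    have := hpos i
    field_simp
    ring
  have hsball : ∀ i, sM i ∈ Metric.closedBall (0 : M2') 1 := fun i => by
    rw [Metric.mem_closedBall, dist_zero_right, hnorm_s i]
    linarith [hcpos i]
  haveI : ProperSpace M2' := inferInstance
  obtain ⟨s, -, φ₁, hφ₁, hs⟩ :=
    (isCompact_closedBall (0 : M2') 1).tendsto_subseq hsball
  obtain ⟨cl, hclmem, φ₂, hφ₂, hcl⟩ :=
    (isCompact_Icc (a := (0 : ℝ)) (b := 1)).tendsto_subseq
      (x := fun k => c (φ₁ k)) (fun k => ⟨(hcpos _).le, hcle _⟩)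
  set ψ : ℕ → ℕ := φ₁ ∘ φ₂ with hψdef
  have hψmono : StrictMono ψ := hφ₁.comp hφ₂
  have hψtop : Tendsto ψ atTop atTop := hψmono.tendsto_atTop
  have hsψ : Tendsto (fun k => sM (ψ k)) atTop (𝓝 s) := hs.comp hφ₂.tendsto_atTop
  have hcψ : Tendsto (fun k => c (ψ k)) atTop (𝓝 cl) := hcl
  have hcψC : Tendsto (fun k => ((c (ψ k) : ℝ) : ℂ)) atTop (𝓝 ((cl : ℝ) : ℂ)) :=
    (Complex.continuous_ofReal.tendsto cl).comp hcψ
  rcases eq_or_lt_of_le hclmem.1 with h0 | h0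
  · -- cl = 0 : derive a contradiction with NoCommonEigenvector
    exfalso
    have hns : Tendsto (fun k => ‖sM (ψ k)‖) atTop (𝓝 ‖s‖) :=
      (continuous_norm.tendsto s).comp hsψ
    have hns' : Tendsto (fun k => ‖sM (ψ k)‖) atTop (𝓝 (1 - cl)) := by
      simp only [hnorm_s]
      exact tendsto_const_nhds.sub hcψ
    have hnorm1 : ‖s‖ = 1 := by
      have h := tendsto_nhds_unique hns hns'
      rw [h, ← h0, sub_zero]
    have hsne : s ≠ 0 := by
      intro h; rw [h, norm_zero] at hnorm1; norm_num at hnorm1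
    have hdetval : ∀ i, (sM i).det = (((c i : ℝ) : ℂ)) ^ 2 := fun i => by
      rw [hsMdef]
      simp only [Matrix.det_smul, Matrix.SpecialLinearGroup.det_coe,
        Fintype.card_fin, mul_one, smul_eq_mul]
    have hdet1 : Tendsto (fun k => (sM (ψ k)).det) atTop (𝓝 s.det) :=
      ((continuous_id.matrix_det).tendsto s).comp hsψ
    have hdet2 : Tendsto (fun k => (sM (ψ k)).det) atTop (𝓝 0) := by
      simp only [hdetval]
      have := hcψC.pow 2
      rw [← h0] at this
      simpa using this
    have hdets : s.det = 0 := tendsto_nhds_unique hdet1 hdet2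
    have key : ∀ g : Γ, g ∈ Γ₂ → ∀ Lg : SL2C, SLTendsto (fun i => ρ i g) Lg →
        s * (Lg : M2') * s.adjugate = 0 := by
      intro g hg Lg hLg
      obtain ⟨K, hK⟩ := ht g hg
      have lhs : Tendsto (fun k => sM (ψ k) * ((ρ (ψ k) g : M2')) * (sM (ψ k)).adjugate)
          atTop (𝓝 (s * (Lg : M2') * s.adjugate)) :=
        (hsψ.mul (hLg.comp hψtop)).mul
          (((continuous_id.matrix_adjugate).tendsto s).comp hsψ)
      have eqfun : ∀ i, sM i * ((ρ i g : M2')) * (sM i).adjugate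
          = (((c i : ℝ) : ℂ)) ^ 2 • ((t i * ρ i g * (t i)⁻¹ : SL2C) : M2') := by
        intro i
        rw [hsMdef]
        simp only [Matrix.adjugate_smul, Fintype.card_fin, pow_one,
          Matrix.SpecialLinearGroup.coe_mul, Matrix.SpecialLinearGroup.coe_inv]
        rw [smul_mul_assoc, smul_mul_assoc, mul_smul_comm, smul_smul]
        rw [show (2 : ℕ) - 1 = 1 from rfl, pow_one, ← pow_two]
      have rhs : Tendsto (fun k => sM (ψ k) * ((ρ (ψ k) g : M2')) * (sM (ψ k)).adjugate)
          atTop (𝓝 0) := by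
        simp only [eqfun]
        have h2' := (hcψC.pow 2).smul (hK.comp hψtop)
        rw [← h0] at h2'
        simpa using h2'
      exact tendsto_nhds_unique lhs rhs
    obtain ⟨v, hv0, hμ, hν⟩ := common_eigen (Lγ : M2') (Lδ : M2') s hsne hdets
      (key γ hγ.2 Lγ hγconv) (key δ hδ.2 Lδ hδconv)
    exact hnce ⟨v, hv0, hμ, hν⟩
  · -- cl > 0 : the conjugating elements converge along ψ
    have hclC : ((cl : ℝ) : ℂ) ≠ 0 := by
      simp only [ne_eq, Complex.ofReal_eq_zero]
      exact ne_of_gt h0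
    have htval : ∀ i, ((t i : M2')) = (((c i : ℝ) : ℂ))⁻¹ • sM i := by
      intro i
      rw [hsMdef, smul_smul, inv_mul_cancel₀, one_smul]
      simp only [ne_eq, Complex.ofReal_eq_zero]
      exact ne_of_gt (hcpos i)
    have htψ : Tendsto (fun k => ((t (ψ k) : M2'))) atTop
        (𝓝 ((((cl : ℝ) : ℂ))⁻¹ • s)) := by
      simp only [htval]
      exact (hcψC.inv₀ hclC).smul hsψ
    set T : M2' := (((cl : ℝ) : ℂ))⁻¹ • s with hTdef
    have hdetT : T.det = 1 := by
      have l1 : Tendsto (fun k => ((t (ψ k) : M2')).det) atTop (𝓝 T.det) :=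
        ((continuous_id.matrix_det).tendsto T).comp htψ
      have l2 : (fun k => ((t (ψ k) : M2')).det) = fun _ => (1 : ℂ) :=
        funext fun k => Matrix.SpecialLinearGroup.det_coe _
      rw [l2] at l1
      exact tendsto_nhds_unique l1 tendsto_const_nhds
    set Tsl : SL2C := ⟨T, hdetT⟩ with hTsl
    have htadj : Tendsto (fun k => ((t (ψ k) : M2')).adjugate) atTop
        (𝓝 T.adjugate) :=
      ((continuous_id.matrix_adjugate).tendsto T).comp htψ
    refine ⟨ψ, hψmono, fun g => ?_⟩
    have hg : g ∈ Subgroup.closure ((Γ₁ : Set Γ) ∪ (Γ₂ : Set Γ)) := by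
      rw [hgen]; trivial
    refine Subgroup.closure_induction
      (p := fun g _ => ∃ L : SL2C, SLTendsto (fun k => ρ (ψ k) g) L)
      ?_ ?_ ?_ ?_ hg
    · rintro x (hx | hx)
      · obtain ⟨L, hL⟩ := h1 x hx
        exact ⟨L, hL.comp hψtop⟩
      · obtain ⟨L, hL⟩ := ht x hx
        refine ⟨Tsl⁻¹ * L * Tsl, ?_⟩
        have heq : (fun k => ((ρ (ψ k) x : M2'))) = fun k =>
            ((t (ψ k) : M2')).adjugate *
              ((t (ψ k) * ρ (ψ k) x * (t (ψ k))⁻¹ : SL2C) : M2') * (t (ψ k) : M2') := by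
          funext k
          have : ρ (ψ k) x = (t (ψ k))⁻¹ * (t (ψ k) * ρ (ψ k) x * (t (ψ k))⁻¹) * t (ψ k) := by
            group
          conv_lhs => rw [this]
          simp [Matrix.SpecialLinearGroup.coe_mul, Matrix.SpecialLinearGroup.coe_inv]
        show Tendsto (fun k => ((ρ (ψ k) x : M2'))) atTop (𝓝 ((Tsl⁻¹ * L * Tsl : SL2C) : M2'))
        rw [heq]
        have hlim : ((Tsl⁻¹ * L * Tsl : SL2C) : M2') = T.adjugate * (L : M2') * T := by
          rw [Matrix.SpecialLinearGroup.coe_mul, Matrix.SpecialLinearGroup.coe_mul, Matrix.SpecialLinearGroup.coe_inv]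
        rw [hlim]
        exact (htadj.mul (hL.comp hψtop)).mul htψ
    · refine ⟨1, ?_⟩
      show Tendsto (fun k => ((ρ (ψ k) (1 : Γ) : M2'))) atTop (𝓝 ((1 : SL2C) : M2'))
      simp only [_root_.map_one]
      exact tendsto_const_nhds
    · rintro x y - - ⟨L, hL⟩ ⟨M, hM⟩
      refine ⟨L * M, ?_⟩
      show Tendsto (fun k => ((ρ (ψ k) (x * y) : M2'))) atTop (𝓝 ((L * M : SL2C) : M2'))
      simp only [_root_.map_mul, Matrix.SpecialLinearGroup.coe_mul]
      exact Filter.Tendsto.mul hL hM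
    · rintro x - ⟨L, hL⟩
      refine ⟨L⁻¹, ?_⟩
      show Tendsto (fun k => ((ρ (ψ k) x⁻¹ : M2'))) atTop (𝓝 ((L⁻¹ : SL2C) : M2'))
      simp only [_root_.map_inv, Matrix.SpecialLinearGroup.coe_inv]
      exact ((continuous_id.matrix_adjugate).tendsto _).comp hL
end

section
/- Let Γ be a group generated by a subgroup Γ₀ together with one element t, and let ρ_i : Γ → SL(2,ℂ) be a sequence of group homomorphisms. Assume: (i) for every g ∈ Γ₀ the sequence (ρ_i(g)) converges in SL(2,ℂ); (ii) there exist γ, δ ∈ Γ₀ with tγt⁻¹ ∈ Γ₀ and tδt⁻¹ ∈ Γ₀ such that the limits of (ρ_i(γ)) and (ρ_i(δ)) are loxodromic elements with no common eigenvector in ℂ². Then the sequence (ρ_i(t)) has a convergent subsequence in SL(2,ℂ), and consequently there is a subsequence (ρ_{i_k}) such that (ρ_{i_k}(g)) converges in SL(2,ℂ) for every g ∈ Γ. -/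
open Matrix Filter Topology

set_option maxHeartbeats 1000000

/- ### Auxiliary material -/

attribute [local instance] Matrix.normedAddCommGroup Matrix.normedSpace

abbrev Mat2 := Matrix (Fin 2) (Fin 2) ℂ

/-- 2×2 "cross product" of vectors. -/
def cross (a b : Fin 2 → ℂ) : ℂ := a 0 * b 1 - a 1 * b 0

lemma cross_mulVec (M : Mat2) (x y : Fin 2 → ℂ) :
    cross (M.mulVec x) (M.mulVec y) = M.det * cross x y := by
  simp [cross, Matrix.mulVec, dotProduct, Fin.sum_univ_two, Matrix.det_fin_two]
  ring

lemma eq_smul_of_cross_eq_zero {u v : Fin 2 → ℂ} (hu : u ≠ 0) (h : cross v u = 0) :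
    ∃ μ : ℂ, v = μ • u := by
  have hu' : u 0 ≠ 0 ∨ u 1 ≠ 0 := by
    by_contra hc
    push_neg at hc
    exact hu (funext fun i => by fin_cases i <;> simp [hc.1, hc.2])
  unfold cross at h
  rcases hu' with h0 | h1
  · refine ⟨v 0 / u 0, funext fun i => ?_⟩
    fin_cases i <;> simp only [Fin.zero_eta, Fin.mk_one, Fin.isValue, Pi.smul_apply, smul_eq_mul] <;> field_simp
    linear_combination -h
  · refine ⟨v 1 / u 1, funext fun i => ?_⟩
    fin_cases i <;> simp only [Fin.zero_eta, Fin.mk_one, Fin.isValue, Pi.smul_apply, smul_eq_mul] <;> field_simp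
    linear_combination h

/-- The key compactness lemma: if `U i` conjugates two convergent sequences to convergent
sequences whose limits have no common eigenvector, then `U i` is bounded. -/
lemma bounded_of_conj {U c d g h : ℕ → SL2C} {Lc Ld Lγ Lδ : SL2C}
    (hrel1 : ∀ i, (U i : Mat2) * (c i : Mat2) = (g i : Mat2) * (U i : Mat2))
    (hrel2 : ∀ i, (U i : Mat2) * (d i : Mat2) = (h i : Mat2) * (U i : Mat2))
    (hc : SLTendsto c Lc) (hd : SLTendsto d Ld)
    (hg : SLTendsto g Lγ) (hh : SLTendsto h Lδ)
    (hno : NoCommonEigenvector Lγ Lδ) :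
    ∃ M : ℝ, ∀ i, ‖(U i : Mat2)‖ ≤ M := by
  by_contra hM
  push_neg at hM
  have hfreq : ∀ n : ℕ, ∃ᶠ i in atTop, (n : ℝ) < ‖(U i : Mat2)‖ := by
    intro n
    rw [Filter.frequently_atTop]
    intro m
    obtain ⟨i, hi⟩ := hM ((n : ℝ) + ∑ j ∈ Finset.range m, ‖(U j : Mat2)‖)
    refine ⟨i, ?_, ?_⟩
    · by_contra hlt
      push_neg at hlt
      have h1 : ‖(U i : Mat2)‖ ≤ ∑ j ∈ Finset.range m, ‖(U j : Mat2)‖ :=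
        Finset.single_le_sum (f := fun j => ‖(U j : Mat2)‖)
          (fun j _ => norm_nonneg _) (Finset.mem_range.2 hlt)
      have h2 : (0:ℝ) ≤ (n:ℝ) := Nat.cast_nonneg n
      linarith
    · have h2 : (0:ℝ) ≤ ∑ j ∈ Finset.range m, ‖(U j : Mat2)‖ :=
        Finset.sum_nonneg fun j _ => norm_nonneg _
      linarith
  obtain ⟨φ, hφ, hφn⟩ := Filter.extraction_forall_of_frequently hfreq
  set s : ℕ → ℝ := fun n => ‖(U (φ n) : Mat2)‖ with hs
  have hspos : ∀ n, 0 < s n := fun n => lt_of_le_of_lt (Nat.cast_nonneg n) (hφn n)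
  have hstop : Tendsto s atTop atTop :=
    tendsto_atTop_mono (fun n => (hφn n).le) tendsto_natCast_atTop_atTop
  set S : ℕ → Mat2 := fun n => (((s n : ℝ) : ℂ))⁻¹ • (U (φ n) : Mat2) with hSdef
  have hSnorm : ∀ n, ‖S n‖ = 1 := by
    intro n
    rw [hSdef]
    simp only [norm_smul, norm_inv, Complex.norm_real, Real.norm_eq_abs,
      abs_of_pos (hspos n)]
    exact inv_mul_cancel₀ (hspos n).ne'
  have hsphere : ∀ n, S n ∈ Metric.sphere (0 : Mat2) 1 := fun n =>
    mem_sphere_zero_iff_norm.2 (hSnorm n)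
  haveI : ProperSpace Mat2 := FiniteDimensional.proper ℂ Mat2
  obtain ⟨S₀, hS₀mem, ψ, hψ, hψt⟩ := (isCompact_sphere (0:Mat2) 1).tendsto_subseq hsphere
  have hS₀ne : S₀ ≠ 0 := by
    intro h0
    rw [h0, mem_sphere_zero_iff_norm] at hS₀mem
    simp at hS₀mem
  -- determinant of the limit is zero
  have hdetS : ∀ n, (S n).det = (((s n : ℝ) : ℂ))⁻¹ ^ 2 := by
    intro n
    rw [hSdef]
    simp [Matrix.det_smul]
  have hinv0 : Tendsto (fun n => (((s (ψ n) : ℝ) : ℂ))⁻¹) atTop (𝓝 0) := by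
    have h1 : Tendsto (fun n => s (ψ n)) atTop atTop := hstop.comp hψ.tendsto_atTop
    have h2 : Tendsto (fun n => (s (ψ n))⁻¹) atTop (𝓝 0) := tendsto_inv_atTop_zero.comp h1
    have h3 := (Complex.continuous_ofReal.tendsto 0).comp h2
    simpa [Function.comp_def] using h3
  have hdet0 : S₀.det = 0 := by
    have h1 : Tendsto (fun n => (S (ψ n)).det) atTop (𝓝 S₀.det) :=
      (Continuous.matrix_det continuous_id).continuousAt.tendsto.comp hψt
    have h2 : Tendsto (fun n => (S (ψ n)).det) atTop (𝓝 0) := by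
      simp only [hdetS]
      have := hinv0.mul hinv0
      simpa [sq] using this
    exact tendsto_nhds_unique h1 h2
  -- limits of the conjugation relations
  have hrelS1 : ∀ n, S n * (c (φ n) : Mat2) = (g (φ n) : Mat2) * S n := by
    intro n
    rw [hSdef]
    simp only [smul_mul_assoc, mul_smul_comm, hrel1]
  have hrelS2 : ∀ n, S n * (d (φ n) : Mat2) = (h (φ n) : Mat2) * S n := by
    intro n
    rw [hSdef]
    simp only [smul_mul_assoc, mul_smul_comm, hrel2]
  have hcomp : Tendsto (fun n => φ (ψ n)) atTop atTop := (hφ.comp hψ).tendsto_atTop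
  have hTc : Tendsto (fun n => (c (φ (ψ n)) : Mat2)) atTop (𝓝 (Lc : Mat2)) := hc.comp hcomp
  have hTd : Tendsto (fun n => (d (φ (ψ n)) : Mat2)) atTop (𝓝 (Ld : Mat2)) := hd.comp hcomp
  have hTg : Tendsto (fun n => (g (φ (ψ n)) : Mat2)) atTop (𝓝 (Lγ : Mat2)) := hg.comp hcomp
  have hTh : Tendsto (fun n => (h (φ (ψ n)) : Mat2)) atTop (𝓝 (Lδ : Mat2)) := hh.comp hcomp
  have hψt' : Tendsto (fun n => S (ψ n)) atTop (𝓝 S₀) := hψt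
  have hlim1 : S₀ * (Lc : Mat2) = (Lγ : Mat2) * S₀ := by
    refine tendsto_nhds_unique (f := fun n => S (ψ n) * (c (φ (ψ n)) : Mat2)) (hψt'.mul hTc) ?_
    have hb : Tendsto (fun n => (g (φ (ψ n)) : Mat2) * S (ψ n)) atTop (𝓝 ((Lγ : Mat2) * S₀)) :=
      hTg.mul hψt'
    simpa only [hrelS1] using hb
  have hlim2 : S₀ * (Ld : Mat2) = (Lδ : Mat2) * S₀ := by
    refine tendsto_nhds_unique (f := fun n => S (ψ n) * (d (φ (ψ n)) : Mat2)) (hψt'.mul hTd) ?_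
    have hb : Tendsto (fun n => (h (φ (ψ n)) : Mat2) * S (ψ n)) atTop (𝓝 ((Lδ : Mat2) * S₀)) :=
      hTh.mul hψt'
    simpa only [hrelS2] using hb
  -- extract a common eigenvector
  obtain ⟨i0, j0, hij⟩ : ∃ i j, S₀ i j ≠ 0 := by
    by_contra hz
    push_neg at hz
    exact hS₀ne (by ext i j; simp [hz])
  set x₀ : Fin 2 → ℂ := Pi.single j0 1 with hx₀
  set u : Fin 2 → ℂ := S₀.mulVec x₀ with hudef
  have hu : u ≠ 0 := by
    intro h0
    apply hij
    have h1 : u i0 = 0 := by rw [h0]; rfl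
    simpa [hudef, hx₀, Matrix.mulVec_single] using h1
  have keyA : ∃ μ : ℂ, (Lγ : Mat2).mulVec u = μ • u := by
    apply eq_smul_of_cross_eq_zero hu
    have h1 : (Lγ : Mat2).mulVec u = S₀.mulVec ((Lc : Mat2).mulVec x₀) := by
      rw [hudef, Matrix.mulVec_mulVec, ← hlim1, ← Matrix.mulVec_mulVec]
    rw [h1, hudef, cross_mulVec, hdet0, zero_mul]
  have keyB : ∃ ν : ℂ, (Lδ : Mat2).mulVec u = ν • u := by
    apply eq_smul_of_cross_eq_zero hu
    have h1 : (Lδ : Mat2).mulVec u = S₀.mulVec ((Ld : Mat2).mulVec x₀) := by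
      rw [hudef, Matrix.mulVec_mulVec, ← hlim2, ← Matrix.mulVec_mulVec]
    rw [h1, hudef, cross_mulVec, hdet0, zero_mul]
  exact hno ⟨u, hu, keyA, keyB⟩

/-- HNN-extension convergence: if `Γ` is generated by a subgroup `Γ₀` together with one
element `t`, the restrictions of `ρ_i` to `Γ₀` converge, and there are `γ, δ ∈ Γ₀` with
`tγt⁻¹, tδt⁻¹ ∈ Γ₀` whose images converge to loxodromic elements with no common
eigenvector, then `(ρ_i t)` has a convergent subsequence, and consequently a
subsequence of `ρ_i` converges on all of `Γ`. -/
theorem hnn_convergence {Γ : Type*} [Group Γ] (Γ₀ : Subgroup Γ) (t : Γ)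
    (hgen : Subgroup.closure ((Γ₀ : Set Γ) ∪ {t}) = ⊤)
    (ρ : ℕ → Γ →* SL2C)
    (h1 : ∀ g ∈ Γ₀, ∃ L : SL2C, SLTendsto (fun i => ρ i g) L)
    (h2 : ∃ γ ∈ Γ₀, ∃ δ ∈ Γ₀, t * γ * t⁻¹ ∈ Γ₀ ∧ t * δ * t⁻¹ ∈ Γ₀ ∧
      ∃ Lγ Lδ : SL2C,
        SLTendsto (fun i => ρ i γ) Lγ ∧ SLTendsto (fun i => ρ i δ) Lδ ∧
        Loxodromic Lγ ∧ Loxodromic Lδ ∧ NoCommonEigenvector Lγ Lδ) :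
    (∃ φ : ℕ → ℕ, StrictMono φ ∧ ∃ L : SL2C, SLTendsto (fun k => ρ (φ k) t) L) ∧
    (∃ φ : ℕ → ℕ, StrictMono φ ∧
      ∀ g : Γ, ∃ L : SL2C, SLTendsto (fun k => ρ (φ k) g) L) := by
  obtain ⟨γ, hγ, δ, hδ, hγc, hδc, Lγ, Lδ, hLγ, hLδ, _, _, hno⟩ := h2
  obtain ⟨Lc, hLc⟩ := h1 _ hγc
  obtain ⟨Ld, hLd⟩ := h1 _ hδc
  -- the sequence U i = ρ i t⁻¹ satisfies the conjugation relations
  have hrel1 : ∀ i, ((ρ i t⁻¹ : SL2C) : Mat2) * ((ρ i (t * γ * t⁻¹) : SL2C) : Mat2)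
      = ((ρ i γ : SL2C) : Mat2) * ((ρ i t⁻¹ : SL2C) : Mat2) := by
    intro i
    have : (t⁻¹ * (t * γ * t⁻¹)) = (γ * t⁻¹) := by group
    have e : (ρ i t⁻¹) * (ρ i (t * γ * t⁻¹)) = (ρ i γ) * (ρ i t⁻¹) := by
      rw [← _root_.map_mul, ← _root_.map_mul, this]
    calc ((ρ i t⁻¹ : SL2C) : Mat2) * ((ρ i (t * γ * t⁻¹) : SL2C) : Mat2)
        = (((ρ i t⁻¹) * (ρ i (t * γ * t⁻¹)) : SL2C) : Mat2) := by
          rw [Matrix.SpecialLinearGroup.coe_mul]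
      _ = (((ρ i γ) * (ρ i t⁻¹) : SL2C) : Mat2) := by rw [e]
      _ = ((ρ i γ : SL2C) : Mat2) * ((ρ i t⁻¹ : SL2C) : Mat2) := by
          rw [Matrix.SpecialLinearGroup.coe_mul]
  have hrel2 : ∀ i, ((ρ i t⁻¹ : SL2C) : Mat2) * ((ρ i (t * δ * t⁻¹) : SL2C) : Mat2)
      = ((ρ i δ : SL2C) : Mat2) * ((ρ i t⁻¹ : SL2C) : Mat2) := by
    intro i
    have : (t⁻¹ * (t * δ * t⁻¹)) = (δ * t⁻¹) := by group
    have e : (ρ i t⁻¹) * (ρ i (t * δ * t⁻¹)) = (ρ i δ) * (ρ i t⁻¹) := by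
      rw [← _root_.map_mul, ← _root_.map_mul, this]
    calc ((ρ i t⁻¹ : SL2C) : Mat2) * ((ρ i (t * δ * t⁻¹) : SL2C) : Mat2)
        = (((ρ i t⁻¹) * (ρ i (t * δ * t⁻¹)) : SL2C) : Mat2) := by
          rw [Matrix.SpecialLinearGroup.coe_mul]
      _ = (((ρ i δ) * (ρ i t⁻¹) : SL2C) : Mat2) := by rw [e]
      _ = ((ρ i δ : SL2C) : Mat2) * ((ρ i t⁻¹ : SL2C) : Mat2) := by
          rw [Matrix.SpecialLinearGroup.coe_mul]
  obtain ⟨M, hMbd⟩ := bounded_of_conj hrel1 hrel2 hLc hLd hLγ hLδ hno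
  -- extract a convergent subsequence of U
  haveI : ProperSpace Mat2 := FiniteDimensional.proper ℂ Mat2
  have hmem : ∀ i, ((ρ i t⁻¹ : SL2C) : Mat2) ∈ Metric.closedBall (0 : Mat2) M := fun i =>
    Metric.mem_closedBall.2 (by simpa [dist_zero_right] using hMbd i)
  obtain ⟨W, _, φ, hφ, hφt⟩ :=
    tendsto_subseq_of_bounded Metric.isBounded_closedBall hmem
  have hφt' : Tendsto (fun k => ((ρ (φ k) t⁻¹ : SL2C) : Mat2)) atTop (𝓝 W) := hφt
  have hdetW : W.det = 1 := by
    have ha : Tendsto (fun k => ((ρ (φ k) t⁻¹ : SL2C) : Mat2).det) atTop (𝓝 W.det) :=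
      (Continuous.matrix_det continuous_id).continuousAt.tendsto.comp hφt'
    have hb : Tendsto (fun k => ((ρ (φ k) t⁻¹ : SL2C) : Mat2).det) atTop (𝓝 1) := by
      have he : ∀ k, ((ρ (φ k) t⁻¹ : SL2C) : Mat2).det = 1 := fun k => (ρ (φ k) t⁻¹).prop
      simp only [he]
      exact tendsto_const_nhds
    exact tendsto_nhds_unique ha hb
  -- the limit of ρ (φ k) t is the adjugate of W
  have hdetadjW : (adjugate W).det = 1 := by
    rw [Matrix.det_adjugate, hdetW, one_pow]
  set Lt : SL2C := ⟨adjugate W, hdetadjW⟩ with hLt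
  have hcoe : ∀ i, ((ρ i t : SL2C) : Mat2) = adjugate ((ρ i t⁻¹ : SL2C) : Mat2) := by
    intro i
    have h0 : ρ i t = (ρ i t⁻¹)⁻¹ := by rw [map_inv, inv_inv]
    rw [h0, Matrix.SpecialLinearGroup.coe_inv]
  have htconv : SLTendsto (fun k => ρ (φ k) t) Lt := by
    unfold SLTendsto
    have := (Continuous.matrix_adjugate continuous_id).continuousAt.tendsto.comp hφt'
    simp only [hcoe]
    exact this
  refine ⟨⟨φ, hφ, Lt, htconv⟩, φ, hφ, ?_⟩
  -- the set of elements on which the subsequence converges is a subgroup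
  set Sgp : Subgroup Γ :=
    { carrier := {g : Γ | ∃ L : SL2C, SLTendsto (fun k => ρ (φ k) g) L}
      one_mem' := by
        refine ⟨1, ?_⟩
        unfold SLTendsto
        simp only [_root_.map_one, Matrix.SpecialLinearGroup.coe_one]
        exact tendsto_const_nhds
      mul_mem' := by
        rintro a b ⟨La, hLa⟩ ⟨Lb, hLb⟩
        refine ⟨La * Lb, ?_⟩
        unfold SLTendsto at *
        have := hLa.mul hLb
        simp only [_root_.map_mul, Matrix.SpecialLinearGroup.coe_mul]
        simpa using this
      inv_mem' := by
        rintro a ⟨La, hLa⟩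
        refine ⟨La⁻¹, ?_⟩
        unfold SLTendsto at *
        have := (Continuous.matrix_adjugate continuous_id).continuousAt.tendsto.comp hLa
        simp only [_root_.map_inv, Matrix.SpecialLinearGroup.coe_inv]
        exact this } with hSgp
  intro g
  have hsub : ((Γ₀ : Set Γ) ∪ {t}) ⊆ (Sgp : Set Γ) := by
    rintro x (hx | hx)
    · obtain ⟨L, hL⟩ := h1 x hx
      exact ⟨L, hL.comp hφ.tendsto_atTop⟩
    · rw [Set.mem_singleton_iff] at hx
      subst hx
      exact ⟨Lt, htconv⟩
  have hle : Subgroup.closure ((Γ₀ : Set Γ) ∪ {t}) ≤ Sgp := (Subgroup.closure_le _).2 hsub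
  rw [hgen] at hle
  exact hle (Subgroup.mem_top g)
end

section
/- Let (t_i) be a sequence in SL(2,ℂ). Suppose there are nonzero vectors u₁, u₂, u₃ ∈ ℂ² spanning three pairwise distinct one-dimensional subspaces, nonzero vectors w₁, w₂, w₃ ∈ ℂ² spanning three pairwise distinct one-dimensional subspaces, and nonzero complex scalars c_{i,j} (for j = 1, 2, 3) such that c_{i,j} · (t_i u_j) → w_j as i → ∞ for each j. Then the sequence (t_i) has a convergent subsequence in SL(2,ℂ). -/
open Matrix Filter Topology

noncomputable section

def det2 (x y : Fin 2 → ℂ) : ℂ := x 0 * y 1 - x 1 * y 0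

lemma det2_tendsto {x y : ℕ → Fin 2 → ℂ} {a b : Fin 2 → ℂ}
    (hx : Tendsto x atTop (𝓝 a)) (hy : Tendsto y atTop (𝓝 b)) :
    Tendsto (fun i => det2 (x i) (y i)) atTop (𝓝 (det2 a b)) :=
  ((tendsto_pi_nhds.mp hx 0).mul (tendsto_pi_nhds.mp hy 1)).sub
    ((tendsto_pi_nhds.mp hx 1).mul (tendsto_pi_nhds.mp hy 0))

lemma det2_ne_zero {x y : Fin 2 → ℂ} (hx : x ≠ 0) (hy : y ≠ 0)
    (h : (Submodule.span ℂ {x} : Submodule ℂ (Fin 2 → ℂ)) ≠ Submodule.span ℂ {y}) :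
    det2 x y ≠ 0 := by
  intro h0
  apply h
  have hxy : x 0 * y 1 = x 1 * y 0 := sub_eq_zero.mp h0
  have key : ∃ tc : ℂ, tc ≠ 0 ∧ y = tc • x := by
    by_cases hx0 : x 0 = 0
    · have hx1 : x 1 ≠ 0 := by
        intro hx1
        exact hx (funext fun r => by fin_cases r <;> assumption)
      have hy0 : y 0 = 0 := by
        have := hxy
        rw [hx0, zero_mul] at this
        exact (mul_eq_zero.mp this.symm).resolve_left hx1
      have hy1 : y 1 ≠ 0 := by
        intro hy1
        exact hy (funext fun r => by fin_cases r <;> assumption)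
      refine ⟨y 1 / x 1, div_ne_zero hy1 hx1, funext fun r => ?_⟩
      fin_cases r
      · show y 0 = y 1 / x 1 * x 0
        rw [hx0, hy0, mul_zero]
      · show y 1 = y 1 / x 1 * x 1
        rw [div_mul_cancel₀ _ hx1]
    · have hy0 : y 0 ≠ 0 := by
        intro hy0
        have hy1 : y 1 = 0 := by
          have := hxy
          rw [hy0, mul_zero] at this
          exact (mul_eq_zero.mp this).resolve_left hx0
        exact hy (funext fun r => by fin_cases r <;> assumption)
      refine ⟨y 0 / x 0, div_ne_zero hy0 hx0, funext fun r => ?_⟩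
      fin_cases r
      · show y 0 = y 0 / x 0 * x 0
        rw [div_mul_cancel₀ _ hx0]
      · show y 1 = y 0 / x 0 * x 1
        field_simp
        linear_combination hxy
  obtain ⟨tc, htc, hyt⟩ := key
  apply le_antisymm <;> rw [Submodule.span_le, Set.singleton_subset_iff]
  · exact Submodule.mem_span_singleton.mpr
      ⟨tc⁻¹, by rw [hyt, smul_smul, inv_mul_cancel₀ htc, one_smul]⟩
  · exact Submodule.mem_span_singleton.mpr ⟨tc, hyt.symm⟩

lemma cramer2 {p q : Fin 2 → ℂ} (h : det2 p q ≠ 0) (z : Fin 2 → ℂ) :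
    z = (det2 z q / det2 p q) • p + (det2 p z / det2 p q) • q := by
  have h' : p 0 * q 1 - p 1 * q 0 ≠ 0 := h
  have h'' : q 1 * p 0 - q 0 * p 1 ≠ 0 := by rwa [mul_comm (q 1), mul_comm (q 0)]
  funext r
  fin_cases r <;>
    · show _ = _
      simp only [Pi.add_apply, Pi.smul_apply, smul_eq_mul, det2, Fin.zero_eta, Fin.mk_one]
      field_simp
      ring

lemma det2_mulVec (N : Matrix (Fin 2) (Fin 2) ℂ) (x y : Fin 2 → ℂ) :
    det2 (N.mulVec x) (N.mulVec y) = N.det * det2 x y := by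
  simp only [det2, Matrix.mulVec, dotProduct, Fin.sum_univ_two, Matrix.det_fin_two]
  ring

lemma sq_identity {c0 c1 c2 a b Du : ℂ} (h0 : c0 ≠ 0) (h1 : c1 ≠ 0) (h2 : c2 ≠ 0)
    (ha : a ≠ 0) (hb : b ≠ 0) (hDu : Du ≠ 0) :
    c0 ^ 2 = c0 * c1 * Du / Du * (a * (c2 * b / c1)) / (b * (c2 * a / c0)) := by
  field_simp

lemma det2_smul_smul (a b : ℂ) (x y : Fin 2 → ℂ) :
    det2 (a • x) (b • y) = a * b * det2 x y := by
  simp only [det2, Pi.smul_apply, smul_eq_mul]; ring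

end

/-- Precompactness criterion: if `t_i` maps three distinct directions of ℂ² to three
(projectively) convergent directions with distinct limits, then `(t_i)` has a
convergent subsequence in SL(2,ℂ). -/
theorem three_point_precompactness (t : ℕ → SL2C)
    (u w : Fin 3 → Fin 2 → ℂ) (c : ℕ → Fin 3 → ℂ)
    (hu : ∀ j, u j ≠ 0) (hw : ∀ j, w j ≠ 0)
    (hu_dist : ∀ j k : Fin 3, j ≠ k →
      (Submodule.span ℂ {u j} : Submodule ℂ (Fin 2 → ℂ)) ≠ Submodule.span ℂ {u k})
    (hw_dist : ∀ j k : Fin 3, j ≠ k →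
      (Submodule.span ℂ {w j} : Submodule ℂ (Fin 2 → ℂ)) ≠ Submodule.span ℂ {w k})
    (hc : ∀ i j, c i j ≠ 0)
    (hconv : ∀ j, Filter.Tendsto
      (fun i => c i j • ((t i : Matrix (Fin 2) (Fin 2) ℂ).mulVec (u j)))
      Filter.atTop (nhds (w j))) :
    ∃ φ : ℕ → ℕ, StrictMono φ ∧ ∃ L : SL2C, SLTendsto (fun k => t (φ k)) L := by
  classical
  set M : ℕ → Matrix (Fin 2) (Fin 2) ℂ := fun i => (t i : Matrix (Fin 2) (Fin 2) ℂ) with hM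
  have hdet1 : ∀ i, (M i).det = 1 := fun i => (t i).2
  set v : Fin 3 → ℕ → Fin 2 → ℂ := fun j i => c i j • (M i).mulVec (u j) with hv
  have hvt : ∀ j, Tendsto (v j) atTop (𝓝 (w j)) := fun j => hconv j
  set Du := det2 (u 0) (u 1) with hDu_def
  have hDu : Du ≠ 0 := det2_ne_zero (hu 0) (hu 1) (hu_dist 0 1 (by decide))
  set D := det2 (w 0) (w 1) with hD_def
  have hD : D ≠ 0 := det2_ne_zero (hw 0) (hw 1) (hw_dist 0 1 (by decide))
  set d : ℕ → ℂ := fun i => det2 (v 0 i) (v 1 i) with hd_def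
  have hd_eq : ∀ i, d i = c i 0 * c i 1 * Du := by
    intro i
    show det2 (c i 0 • (M i).mulVec (u 0)) (c i 1 • (M i).mulVec (u 1)) = _
    rw [det2_smul_smul, det2_mulVec, hdet1 i, one_mul]
  have hd_t : Tendsto d atTop (𝓝 D) := det2_tendsto (hvt 0) (hvt 1)
  set a := det2 (u 2) (u 1) / Du with ha_def
  set b := det2 (u 0) (u 2) / Du with hb_def
  have ha : a ≠ 0 := div_ne_zero (det2_ne_zero (hu 2) (hu 1) (hu_dist 2 1 (by decide))) hDu
  have hb : b ≠ 0 := div_ne_zero (det2_ne_zero (hu 0) (hu 2) (hu_dist 0 2 (by decide))) hDu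
  have hu2 : u 2 = a • u 0 + b • u 1 := cramer2 hDu (u 2)
  set lam : ℕ → ℂ := fun i => c i 2 * a / c i 0 with hlam_def
  set mu : ℕ → ℂ := fun i => c i 2 * b / c i 1 with hmu_def
  have hv2 : ∀ i, v 2 i = lam i • v 0 i + mu i • v 1 i := by
    intro i
    show c i 2 • (M i).mulVec (u 2)
        = lam i • (c i 0 • (M i).mulVec (u 0)) + mu i • (c i 1 • (M i).mulVec (u 1))
    rw [hu2, Matrix.mulVec_add, Matrix.mulVec_smul, Matrix.mulVec_smul, smul_add,
      smul_smul, smul_smul, smul_smul, smul_smul]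
    congr 2
    · show c i 2 * a = c i 2 * a / c i 0 * c i 0
      rw [div_mul_cancel₀ _ (hc i 0)]
    · show c i 2 * b = c i 2 * b / c i 1 * c i 1
      rw [div_mul_cancel₀ _ (hc i 1)]
  have hlam_eq : ∀ i, det2 (v 2 i) (v 1 i) = lam i * d i := by
    intro i
    rw [hv2 i, hd_def]
    simp only [det2, Pi.add_apply, Pi.smul_apply, smul_eq_mul]
    ring
  have hmu_eq : ∀ i, det2 (v 0 i) (v 2 i) = mu i * d i := by
    intro i
    rw [hv2 i, hd_def]
    simp only [det2, Pi.add_apply, Pi.smul_apply, smul_eq_mul]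
    ring
  have hLam : det2 (w 2) (w 1) / D ≠ 0 :=
    div_ne_zero (det2_ne_zero (hw 2) (hw 1) (hw_dist 2 1 (by decide))) hD
  have hMu : det2 (w 0) (w 2) / D ≠ 0 :=
    div_ne_zero (det2_ne_zero (hw 0) (hw 2) (hw_dist 0 2 (by decide))) hD
  have hlam_t : Tendsto lam atTop (𝓝 (det2 (w 2) (w 1) / D)) := by
    have h1 : Tendsto (fun i => det2 (v 2 i) (v 1 i) / d i) atTop
        (𝓝 (det2 (w 2) (w 1) / D)) := (det2_tendsto (hvt 2) (hvt 1)).div hd_t hD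
    refine Tendsto.congr' ?_ h1
    filter_upwards [hd_t.eventually_ne hD] with i hdne
    rw [hlam_eq i, mul_div_cancel_right₀ _ hdne]
  have hmu_t : Tendsto mu atTop (𝓝 (det2 (w 0) (w 2) / D)) := by
    have h1 : Tendsto (fun i => det2 (v 0 i) (v 2 i) / d i) atTop
        (𝓝 (det2 (w 0) (w 2) / D)) := (det2_tendsto (hvt 0) (hvt 2)).div hd_t hD
    refine Tendsto.congr' ?_ h1
    filter_upwards [hd_t.eventually_ne hD] with i hdne
    rw [hmu_eq i, mul_div_cancel_right₀ _ hdne]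
  set S := D / Du * (a * (det2 (w 0) (w 2) / D)) / (b * (det2 (w 2) (w 1) / D)) with hS_def
  have hS : S ≠ 0 :=
    div_ne_zero (mul_ne_zero (div_ne_zero hD hDu) (mul_ne_zero ha hMu)) (mul_ne_zero hb hLam)
  have hcsq : ∀ i, (c i 0) ^ 2 = d i / Du * (a * mu i) / (b * lam i) := by
    intro i
    rw [hd_eq i, hlam_def, hmu_def]
    exact sq_identity (hc i 0) (hc i 1) (hc i 2) ha hb hDu
  have hsq_t : Tendsto (fun i => (c i 0) ^ 2) atTop (𝓝 S) := by
    have h1 : Tendsto (fun i => d i / Du * (a * mu i) / (b * lam i)) atTop (𝓝 S) :=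
      ((hd_t.div_const Du).mul (tendsto_const_nhds.mul hmu_t)).div
        (tendsto_const_nhds.mul hlam_t) (mul_ne_zero hb hLam)
    exact h1.congr fun i => (hcsq i).symm
  have hnorm_t : Tendsto (fun i => ‖c i 0‖) atTop (𝓝 (Real.sqrt ‖S‖)) := by
    have h1 : Tendsto (fun i => ‖(c i 0) ^ 2‖) atTop (𝓝 ‖S‖) := hsq_t.norm
    have h2 : Tendsto (fun i => Real.sqrt ‖(c i 0) ^ 2‖) atTop (𝓝 (Real.sqrt ‖S‖)) :=
      (Real.continuous_sqrt.tendsto _).comp h1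
    refine h2.congr fun i => ?_
    rw [norm_pow, Real.sqrt_sq (norm_nonneg _)]
  obtain ⟨R, hR⟩ := hnorm_t.bddAbove_range
  have hball : ∀ n, c n 0 ∈ Metric.closedBall (0 : ℂ) R := fun n =>
    mem_closedBall_zero_iff.mpr (hR (Set.mem_range_self n))
  obtain ⟨e, -, φ, hφ, hce⟩ := tendsto_subseq_of_bounded Metric.isBounded_closedBall hball
  have hφt : Tendsto φ atTop atTop := hφ.tendsto_atTop
  have he2 : e ^ 2 = S := by
    have h1 : Tendsto (fun k => (c (φ k) 0) ^ 2) atTop (𝓝 (e ^ 2)) := hce.pow 2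
    have h2 : Tendsto (fun k => (c (φ k) 0) ^ 2) atTop (𝓝 S) := hsq_t.comp hφt
    exact tendsto_nhds_unique h1 h2
  have he : e ≠ 0 := by
    intro h
    rw [h] at he2
    simp at he2
    exact hS he2.symm
  have he' : D / Du / e ≠ 0 := div_ne_zero (div_ne_zero hD hDu) he
  have hc1id : ∀ i, c i 1 = d i / Du / c i 0 := by
    intro i
    rw [hd_eq i, mul_div_cancel_right₀ _ hDu, mul_div_cancel_left₀ _ (hc i 0)]
  have hc1_t : Tendsto (fun k => c (φ k) 1) atTop (𝓝 (D / Du / e)) := by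
    have h1 : Tendsto (fun k => d (φ k) / Du / c (φ k) 0) atTop (𝓝 (D / Du / e)) :=
      ((hd_t.comp hφt).div_const Du).div hce he
    exact h1.congr fun k => (hc1id (φ k)).symm
  have hP0 : Tendsto (fun k => (M (φ k)).mulVec (u 0)) atTop (𝓝 (e⁻¹ • w 0)) := by
    have h1 : Tendsto (fun k => (c (φ k) 0)⁻¹ • v 0 (φ k)) atTop (𝓝 (e⁻¹ • w 0)) :=
      (hce.inv₀ he).smul ((hvt 0).comp hφt)
    refine h1.congr fun k => ?_
    show (c (φ k) 0)⁻¹ • (c (φ k) 0 • (M (φ k)).mulVec (u 0)) = _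
    rw [inv_smul_smul₀ (hc (φ k) 0)]
  have hP1 : Tendsto (fun k => (M (φ k)).mulVec (u 1)) atTop (𝓝 ((D / Du / e)⁻¹ • w 1)) := by
    have h1 : Tendsto (fun k => (c (φ k) 1)⁻¹ • v 1 (φ k)) atTop (𝓝 ((D / Du / e)⁻¹ • w 1)) :=
      (hc1_t.inv₀ he').smul ((hvt 1).comp hφt)
    refine h1.congr fun k => ?_
    show (c (φ k) 1)⁻¹ • (c (φ k) 1 • (M (φ k)).mulVec (u 1)) = _
    rw [inv_smul_smul₀ (hc (φ k) 1)]
  have hentry : ∀ (N : Matrix (Fin 2) (Fin 2) ℂ) (r s : Fin 2),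
      N r s = det2 (Pi.single s 1) (u 1) / Du * N.mulVec (u 0) r
            + det2 (u 0) (Pi.single s 1) / Du * N.mulVec (u 1) r := by
    intro N r s
    have hE : (Pi.single s 1 : Fin 2 → ℂ)
        = (det2 (Pi.single s 1) (u 1) / Du) • u 0
          + (det2 (u 0) (Pi.single s 1) / Du) • u 1 := cramer2 hDu _
    have h2 : N.mulVec (Pi.single s 1)
        = (det2 (Pi.single s 1) (u 1) / Du) • N.mulVec (u 0)
          + (det2 (u 0) (Pi.single s 1) / Du) • N.mulVec (u 1) := by
      rw [← Matrix.mulVec_smul, ← Matrix.mulVec_smul, ← Matrix.mulVec_add, ← hE]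
    have h3 := congrFun h2 r
    rw [Matrix.mulVec_single] at h3
    simpa only [Pi.add_apply, Pi.smul_apply, smul_eq_mul, mul_one, MulOpposite.op_one, one_smul, Matrix.col_apply] using h3
  set L0 : Matrix (Fin 2) (Fin 2) ℂ := Matrix.of fun r s =>
    det2 (Pi.single s 1) (u 1) / Du * (e⁻¹ • w 0) r
    + det2 (u 0) (Pi.single s 1) / Du * ((D / Du / e)⁻¹ • w 1) r with hL0
  have hML : Tendsto (fun k => M (φ k)) atTop (𝓝 L0) := by
    refine tendsto_pi_nhds.mpr fun r => tendsto_pi_nhds.mpr fun s => ?_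
    have h0 := tendsto_pi_nhds.mp hP0 r
    have h1 := tendsto_pi_nhds.mp hP1 r
    have h : Tendsto (fun k => det2 (Pi.single s 1) (u 1) / Du * (M (φ k) *ᵥ u 0) r
        + det2 (u 0) (Pi.single s 1) / Du * (M (φ k) *ᵥ u 1) r) atTop
        (𝓝 (det2 (Pi.single s 1) (u 1) / Du * (e⁻¹ • w 0) r
        + det2 (u 0) (Pi.single s 1) / Du * ((D / Du / e)⁻¹ • w 1) r)) :=
      (tendsto_const_nhds.mul h0).add (tendsto_const_nhds.mul h1)
    exact h.congr fun k => (hentry (M (φ k)) r s).symm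
  have hLdet : L0.det = 1 := by
    have h00 := tendsto_pi_nhds.mp (tendsto_pi_nhds.mp hML 0) 0
    have h01 := tendsto_pi_nhds.mp (tendsto_pi_nhds.mp hML 0) 1
    have h10 := tendsto_pi_nhds.mp (tendsto_pi_nhds.mp hML 1) 0
    have h11 := tendsto_pi_nhds.mp (tendsto_pi_nhds.mp hML 1) 1
    have hdt : Tendsto (fun k => (M (φ k)).det) atTop (𝓝 L0.det) := by
      rw [Matrix.det_fin_two L0]
      exact ((h00.mul h11).sub (h01.mul h10)).congr fun k => (Matrix.det_fin_two _).symm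
    have h1 : Tendsto (fun _ : ℕ => (1 : ℂ)) atTop (𝓝 L0.det) :=
      hdt.congr fun k => hdet1 (φ k)
    exact tendsto_nhds_unique h1 tendsto_const_nhds
  refine ⟨φ, hφ, ⟨L0, hLdet⟩, ?_⟩
  show Tendsto (fun k => (t (φ k) : Matrix (Fin 2) (Fin 2) ℂ)) atTop (𝓝 L0)
  simpa [hM] using hML
end
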